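/- Let r,s,t,u be integers with ru−st=±1 and let φ₅ : G(r,s,t,u) → ℤ/2ℤ be the (unique) group homomorphism sending the generators a ↦ 1, b ↦ 0, c ↦ 1. Then the kernel of φ₅ equals the subgroup of G(r,s,t,u) generated by the three elements a², b, and a⁻¹·c. -/

import Mathlib

/-- The relators of the presentation of the fundamental group of the sapphire
Sol 3-manifold determined by the matrix `[[r, s], [t, u]]`:
`a·b·a⁻¹·b`, `c²·a^(−2r)·b^(−s)` and `c·a^(2t)·b^u·c⁻¹·a^(2t)·b^u`,
where `a, b, c` are the generators `of 0, of 1, of 2`. -/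
def sapphireRels (r s t u : ℤ) : Set (FreeGroup (Fin 3)) :=
  { FreeGroup.of 0 * FreeGroup.of 1 * (FreeGroup.of 0)⁻¹ * FreeGroup.of 1,
    FreeGroup.of 2 ^ (2 : ℤ) * FreeGroup.of 0 ^ (-(2 * r)) * FreeGroup.of 1 ^ (-s),
    FreeGroup.of 2 * FreeGroup.of 0 ^ (2 * t) * FreeGroup.of 1 ^ u * (FreeGroup.of 2)⁻¹ *
      FreeGroup.of 0 ^ (2 * t) * FreeGroup.of 1 ^ u }

/-- The fundamental group `G(r,s,t,u)` of the sapphire Sol 3-manifold. -/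
abbrev SapphireGroup (r s t u : ℤ) := PresentedGroup (sapphireRels r s t u)

lemma mk_rel_eq_one {α : Type*} {rels : Set (FreeGroup α)} {x : FreeGroup α} (hx : x ∈ rels) :
    PresentedGroup.mk rels x = 1 :=
  (QuotientGroup.eq_one_iff x).mpr (Subgroup.subset_normalClosure hx)

theorem stmt5 (r s t u : ℤ) (h : r * u - s * t = 1 ∨ r * u - s * t = -1)
    (φ : SapphireGroup r s t u →* Multiplicative (ZMod 2))
    (ha : φ (PresentedGroup.of 0) = Multiplicative.ofAdd (1 : ZMod 2))
    (hb : φ (PresentedGroup.of 1) = Multiplicative.ofAdd (0 : ZMod 2))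
    (hc : φ (PresentedGroup.of 2) = Multiplicative.ofAdd (1 : ZMod 2)) :
    φ.ker = Subgroup.closure
      { (PresentedGroup.of 0 : SapphireGroup r s t u) ^ 2,
        PresentedGroup.of 1,
        (PresentedGroup.of 0)⁻¹ * PresentedGroup.of 2 } := by
  set a : SapphireGroup r s t u := PresentedGroup.of 0 with ha'
  set b : SapphireGroup r s t u := PresentedGroup.of 1 with hb'
  set c : SapphireGroup r s t u := PresentedGroup.of 2 with hc'
  set H : Subgroup (SapphireGroup r s t u) := Subgroup.closure {a ^ 2, b, a⁻¹ * c} with hH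
  -- the three generators of H
  have hma : a ^ 2 ∈ H := Subgroup.subset_closure (by left; rfl)
  have hmb : b ∈ H := Subgroup.subset_closure (by right; left; rfl)
  have hmc : a⁻¹ * c ∈ H := Subgroup.subset_closure (by right; right; rfl)
  -- relations
  have rel1 : a * b * a⁻¹ * b = 1 := by
    have := mk_rel_eq_one (rels := sapphireRels r s t u)
      (x := FreeGroup.of 0 * FreeGroup.of 1 * (FreeGroup.of 0)⁻¹ * FreeGroup.of 1)
      (by left; rfl)
    simpa [ha', hb', PresentedGroup.of, map_mul, map_inv] using this
  have rel2 : c ^ (2 : ℤ) * a ^ (-(2 * r)) * b ^ (-s) = 1 := by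
    have := mk_rel_eq_one (rels := sapphireRels r s t u)
      (x := FreeGroup.of 2 ^ (2 : ℤ) * FreeGroup.of 0 ^ (-(2 * r)) * FreeGroup.of 1 ^ (-s))
      (by right; left; rfl)
    simpa [ha', hb', hc', PresentedGroup.of, map_mul, map_zpow] using this
  -- consequences
  have conj1 : a⁻¹ * b * a = b⁻¹ := by
    have h1 : a * b * a⁻¹ = b⁻¹ := mul_eq_one_iff_eq_inv.mp rel1
    have h5 : a⁻¹ * b⁻¹ * a = b := by rw [← h1]; group
    calc a⁻¹ * b * a = (a⁻¹ * b⁻¹ * a)⁻¹ := by group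
      _ = b⁻¹ := by rw [h5]
  have conjz : ∀ k : ℤ, a⁻¹ * b ^ k * a = b ^ (-k) := by
    intro k
    have : (a⁻¹ * b * a⁻¹⁻¹) ^ k = a⁻¹ * b ^ k * a⁻¹⁻¹ := conj_zpow
    rw [inv_inv] at this
    rw [← this, conj1, zpow_neg, inv_zpow]
  have hc2 : c ^ (2 : ℤ) = b ^ s * a ^ (2 * r) := by
    have : c ^ (2 : ℤ) * a ^ (-(2 * r)) = b ^ s := by
      have := mul_eq_one_iff_eq_inv.mp rel2
      rw [this, zpow_neg, inv_inv]
    calc c ^ (2 : ℤ) = c ^ (2 : ℤ) * a ^ (-(2 * r)) * a ^ (2 * r) := by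
          rw [mul_assoc, ← zpow_add, neg_add_cancel, zpow_zero, mul_one]
      _ = b ^ s * a ^ (2 * r) := by rw [this]
  have hbz : ∀ k : ℤ, b ^ k ∈ H := fun k => H.zpow_mem hmb k
  have haz : ∀ k : ℤ, a ^ (2 * k) ∈ H := by
    intro k
    have : a ^ (2 * k) = (a ^ 2) ^ k := by
      rw [← zpow_natCast a 2, ← zpow_mul]; norm_num
    rw [this]; exact H.zpow_mem hma k
  have hca : c * a ∈ H := by
    have key : c * a = (a⁻¹ * c)⁻¹ * (a⁻¹ * (c ^ (2 : ℤ)) * a) := by group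
    have key2 : a⁻¹ * (c ^ (2 : ℤ)) * a = b ^ (-s) * a ^ (2 * r) := by
      rw [hc2]
      calc a⁻¹ * (b ^ s * a ^ (2 * r)) * a
          = (a⁻¹ * b ^ s * a) * (a⁻¹ * a ^ (2 * r) * a) := by group
        _ = b ^ (-s) * a ^ (2 * r) := by rw [conjz]; congr 1; group
    rw [key, key2]
    exact H.mul_mem (H.inv_mem hmc) (H.mul_mem (hbz _) (haz _))
  -- conjugation by a⁻¹ preserves H
  have conjA : ∀ x ∈ H, a⁻¹ * x * a ∈ H := by
    intro x hx
    induction hx using Subgroup.closure_induction with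
    | mem y hy =>
      rcases hy with h1 | h2 | h3
      · subst h1
        have : a⁻¹ * a ^ 2 * a = a ^ 2 := by group
        rw [this]; exact hma
      · subst h2; rw [conj1]; exact H.inv_mem hmb
      · subst h3
        have : a⁻¹ * (a⁻¹ * c) * a = (a ^ 2)⁻¹ * (c * a) := by group
        rw [this]; exact H.mul_mem (H.inv_mem hma) hca
    | one => simpa using H.one_mem
    | mul y z _ _ hy hz =>
      have : a⁻¹ * (y * z) * a = (a⁻¹ * y * a) * (a⁻¹ * z * a) := by group
      rw [this]; exact H.mul_mem hy hz
    | inv y _ hy =>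
      have : a⁻¹ * y⁻¹ * a = (a⁻¹ * y * a)⁻¹ := by group
      rw [this]; exact H.inv_mem hy
  -- the subgroup K = H ∪ aH
  let K : Subgroup (SapphireGroup r s t u) :=
    { carrier := {g | g ∈ H ∨ a⁻¹ * g ∈ H}
      one_mem' := Or.inl H.one_mem
      mul_mem' := by
        rintro x y (hx | hx) (hy | hy)
        · exact Or.inl (H.mul_mem hx hy)
        · refine Or.inr ?_
          have : a⁻¹ * (x * y) = (a⁻¹ * x * a) * (a⁻¹ * y) := by group
          rw [this]; exact H.mul_mem (conjA x hx) hy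
        · refine Or.inr ?_
          have : a⁻¹ * (x * y) = (a⁻¹ * x) * y := by group
          rw [this]; exact H.mul_mem hx hy
        · refine Or.inl ?_
          have : x * y = a ^ 2 * (a⁻¹ * (a⁻¹ * x) * a) * (a⁻¹ * y) := by group
          rw [this]; exact H.mul_mem (H.mul_mem hma (conjA _ hx)) hy
      inv_mem' := by
        rintro x (hx | hx)
        · exact Or.inl (H.inv_mem hx)
        · refine Or.inr ?_
          have : a⁻¹ * x⁻¹ = (a⁻¹ * (a⁻¹ * x)⁻¹ * a) * (a ^ 2)⁻¹ := by group
          rw [this]; exact H.mul_mem (conjA _ (H.inv_mem hx)) (H.inv_mem hma) }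
  have hK : ∀ g : SapphireGroup r s t u, g ∈ H ∨ a⁻¹ * g ∈ H := by
    intro g
    refine PresentedGroup.generated_by _ K ?_ g
    intro j
    fin_cases j
    · exact Or.inr (by convert H.one_mem; exact inv_mul_cancel a)
    · exact Or.inl hmb
    · exact Or.inr hmc
  -- H ≤ ker φ
  have hHker : H ≤ φ.ker := by
    rw [hH, Subgroup.closure_le]
    rintro x (h1 | h2 | h3)
    · subst h1
      simp only [SetLike.mem_coe, MonoidHom.mem_ker, map_pow, ha]
      decide
    · subst h2
      simp only [SetLike.mem_coe, MonoidHom.mem_ker, hb]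
      decide
    · subst h3
      simp only [SetLike.mem_coe, MonoidHom.mem_ker, map_mul, map_inv, ha, hc]
      decide
  -- conclude
  apply le_antisymm
  · intro g hg
    rcases hK g with h1 | h2
    · exact h1
    · exfalso
      have hφg : φ g = 1 := hg
      have : φ (a⁻¹ * g) = 1 := hHker h2
      rw [map_mul, map_inv, ha, hφg, mul_one] at this
      exact absurd this (by decide)
  · exact hHker
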